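/- Let K be a finite group of order l, n ≥ 2, and G = F_n ≀ K the wreath product, with Δ : G → ℤ defined by Δ((f_{k₁},…,f_{k_l})k) = Σ_{i=1}^l ql(f_{k_i}). Then for all g, h ∈ G: |Δ(gh) - Δ(g) - Δ(h)| ≤ 3l. -/

import Mathlib

/-- `tr m` is `-1, 0, 1` according as `m ≡ -1, 0, 1 (mod 3)`. -/
def tr (m : ℤ) : ℤ := if m % 3 = 0 then 0 else if m % 3 = 1 then 1 else -1

/-- `ql w` is the sum of `tr` of the exponents of the syllables in the
reduced syllable form of `w`: the reduced word `w.toWord` is split into maximal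
runs (syllables) of letters with the same generator, and each syllable
`x_i ^ α` contributes `tr α`. -/
def ql {n : ℕ} (w : FreeGroup (Fin n)) : ℤ :=
  ((w.toWord.splitBy (fun p q => p.1 == q.1)).map
    (fun s => tr ((s.map (fun p => if p.2 then (1 : ℤ) else -1)).sum))).sum

/-- The permutation action of `K` on the base group `K → H` of the wreath product
`H ≀ K`, by left translation on the index set: `(k • f) k' = f (k⁻¹ * k')`. -/
def wreathAction (H K : Type*) [Group H] [Group K] : K →* MulAut (K → H) where
  toFun k :=
    { toFun := fun f x => f (k⁻¹ * x)
      invFun := fun f x => f (k * x)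
      left_inv := fun f => by funext x; simp [← mul_assoc]
      right_inv := fun f => by funext x; simp [← mul_assoc]
      map_mul' := fun f g => rfl }
  map_one' := by
    ext f x
    simp
  map_mul' := fun a b => by
    ext f x
    simp [mul_assoc]

/-- The wreath product `H ≀ K = (∏_{k ∈ K} H) ⋊ K`. -/
abbrev WreathProduct (H K : Type*) [Group H] [Group K] :=
  SemidirectProduct (K → H) K (wreathAction H K)

/-- The quasi-homomorphism `Δ : Fₙ ≀ K → ℤ`, `Δ((f_{k₁}, …, f_{k_l})k) = Σᵢ ql(f_{kᵢ})`. -/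
def Δ {n : ℕ} {K : Type*} [Group K] [Fintype K]
    (g : WreathProduct (FreeGroup (Fin n)) K) : ℤ :=
  ∑ k : K, ql (g.left k)

section QMAux
set_option linter.unusedSectionVars false
namespace QM

variable {α : Type*} {β : Type*} [DecidableEq β]

theorem splitBy_loop_eq_append {r : α → α → Bool} {l : List α} {a : α} {g : List α}
    (gs : List (List α)) :
    List.splitBy.loop r l a g gs = gs.reverse ++ List.splitBy.loop r l a g [] := by
  induction l generalizing a g gs with
  | nil => simp [List.splitBy.loop]
  | cons b l IH =>
    simp_rw [List.splitBy.loop]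
    split <;> rw [IH]
    conv_rhs => rw [IH]
    simp

theorem splitBy_loop_spec {r : α → α → Bool} (l : List α) (a : α) (g : List α) :
    List.splitBy.loop r l a g [] =
      (List.splitBy.loop r l a [] []).modifyHead (g.reverse ++ ·) := by
  induction l generalizing a g with
  | nil => simp [List.splitBy.loop]
  | cons b l IH =>
    rw [List.splitBy.loop, List.splitBy.loop]
    cases hr : r a b
    · dsimp only
      simp only [List.reverse_singleton]
      rw [splitBy_loop_eq_append [(a :: g).reverse], splitBy_loop_eq_append [[a]]]
      simp
    · dsimp only
      rw [IH b (a :: g), IH b [a]]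
      cases h : List.splitBy.loop r l b [] [] <;> simp

theorem splitBy_cons {r : α → α → Bool} (a b : α) (l : List α) :
    List.splitBy r (a :: b :: l) =
      if r a b then (List.splitBy r (b :: l)).modifyHead (a :: ·)
      else [a] :: List.splitBy r (b :: l) := by
  show List.splitBy.loop r (b :: l) a [] [] = _
  rw [List.splitBy.loop]
  cases hr : r a b
  · dsimp only
    simp only [List.reverse_singleton, if_neg (Bool.false_ne_true)]
    rw [splitBy_loop_eq_append [[a]]]
    rfl
  · dsimp only
    simp only [if_pos rfl]
    rw [splitBy_loop_spec]
    rfl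

def wt {β : Type*} (a : β × Bool) : ℤ := if a.2 then 1 else -1

variable {β : Type*} [DecidableEq β]

/-- syllable decomposition: list of (generator, exponent) pairs -/
def syl : List (β × Bool) → List (β × ℤ)
  | [] => []
  | a :: l =>
    match syl l with
    | [] => [(a.1, wt a)]
    | (g, e) :: t => if a.1 = g then (a.1, wt a + e) :: t else (a.1, wt a) :: (g, e) :: t

def consS (a : β × Bool) : List (β × ℤ) → List (β × ℤ)
  | [] => [(a.1, wt a)]
  | (g, e) :: t => if a.1 = g then (a.1, wt a + e) :: t else (a.1, wt a) :: (g, e) :: t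

theorem consS_cons (a : β × Bool) (g : β) (e : ℤ) (t : List (β × ℤ)) :
    consS a ((g, e) :: t) = if a.1 = g then (a.1, wt a + e) :: t
      else (a.1, wt a) :: (g, e) :: t := rfl

theorem syl_cons (a : β × Bool) (l : List (β × Bool)) : syl (a :: l) = consS a (syl l) := by
  cases h : syl l <;> simp only [syl, h, consS]

theorem syl_cons_head (a : β × Bool) (l : List (β × Bool)) :
    ∃ e t, syl (a :: l) = (a.1, e) :: t := by
  rw [syl_cons]
  rcases syl l with _ | ⟨⟨g, e⟩, t⟩
  · exact ⟨_, _, rfl⟩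
  · by_cases h : a.1 = g
    · exact ⟨wt a + e, t, by simp [consS, h]⟩
    · exact ⟨wt a, (g, e) :: t, by simp [consS, h]⟩

/-- bridge between `splitBy`-syllables and `syl` -/
theorem splitBy_map_sum (L : List (β × Bool)) :
    (L.splitBy (fun p q => p.1 == q.1)).map (fun s => (s.map wt).sum)
      = (syl L).map Prod.snd := by
  induction L with
  | nil => rfl
  | cons a l IH =>
    cases l with
    | nil => simp [List.splitBy, List.splitBy.loop, syl, wt]
    | cons b l' =>
      rw [QM.splitBy_cons]
      obtain ⟨e, t, hbl⟩ := syl_cons_head b l'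
      by_cases h : a.1 = b.1
      · simp only [h, beq_self_eq_true, if_pos]
        rcases hs : (b :: l').splitBy (fun p q => p.1 == q.1) with _ | ⟨s, S⟩
        · rw [hs] at IH; rw [hbl] at IH; simp at IH
        · rw [hs, hbl] at IH
          simp only [List.map_cons, List.cons.injEq] at IH
          obtain ⟨h1, h2⟩ := IH
          rw [syl_cons, hbl, hs, consS_cons, if_pos h]
          simp [wt, h2, ← h1]
      · have hb : (a.1 == b.1) = false := by simp [h]
        simp only [hb, Bool.false_eq_true, if_false]
        rw [syl_cons, hbl, consS_cons, if_neg h]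
        simp only [List.map_cons, List.map_nil, List.sum_cons, List.sum_nil, add_zero]
        rw [IH, hbl]
        simp [wt]

def consE (x : β × ℤ) : List (β × ℤ) → List (β × ℤ)
  | [] => [x]
  | (g, e) :: t => if x.1 = g then (x.1, x.2 + e) :: t else x :: (g, e) :: t

theorem consE_cons (x : β × ℤ) (g : β) (e : ℤ) (t : List (β × ℤ)) :
    consE x ((g, e) :: t) = if x.1 = g then (x.1, x.2 + e) :: t else x :: (g, e) :: t := rfl

def mergeS : List (β × ℤ) → List (β × ℤ) → List (β × ℤ)
  | [], T => T
  | [x], T => consE x T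
  | x :: y :: S, T => x :: mergeS (y :: S) T

@[simp] theorem mergeS_nil (T : List (β × ℤ)) : mergeS [] T = T := rfl
@[simp] theorem mergeS_single (x : β × ℤ) (T : List (β × ℤ)) : mergeS [x] T = consE x T := rfl
@[simp] theorem mergeS_cons_cons (x y : β × ℤ) (S T : List (β × ℤ)) :
    mergeS (x :: y :: S) T = x :: mergeS (y :: S) T := rfl

theorem consS_consE (a : β × Bool) (T : List (β × ℤ)) : consS a T = consE (a.1, wt a) T := by
  cases T with
  | nil => rfl
  | cons x t => obtain ⟨g, e⟩ := x; rfl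

theorem consS_mergeS (a : β × Bool) (S T : List (β × ℤ)) :
    consS a (mergeS S T) = mergeS (consS a S) T := by
  match S with
  | [] => rw [mergeS_nil, consS_consE]; rfl
  | [(g₁, e₁)] =>
    rw [mergeS_single, consS_cons]
    by_cases h : a.1 = g₁
    · rw [if_pos h, mergeS_single]
      cases T with
      | nil => simp [consE, consS_cons, h]
      | cons u T' =>
        obtain ⟨g', e'⟩ := u
        by_cases h2 : g₁ = g' <;>
          simp [h, h2, consE_cons, consS_cons, add_assoc]
    · rw [if_neg h, mergeS_cons_cons, mergeS_single]
      cases T with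
      | nil => simp [consE, consS_cons, h]
      | cons u T' =>
        obtain ⟨g', e'⟩ := u
        by_cases h2 : g₁ = g'
        · simp [h, h2, consE_cons, consS_cons, h2 ▸ h]
        · simp [h, h2, consE_cons, consS_cons]
  | x :: y :: S' =>
    obtain ⟨gx, ex⟩ := x
    rw [mergeS_cons_cons, consS_cons, consS_cons]
    by_cases h : a.1 = gx
    · rw [if_pos h, if_pos h, mergeS_cons_cons]
    · rw [if_neg h, if_neg h, mergeS_cons_cons, mergeS_cons_cons]

theorem syl_append (X Y : List (β × Bool)) : syl (X ++ Y) = mergeS (syl X) (syl Y) := by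
  induction X with
  | nil => simp [syl]
  | cons a X' IH => rw [List.cons_append, syl_cons, IH, consS_mergeS, ← syl_cons]

theorem mergeS_append_singleton (Z : List (β × ℤ)) (w : β × ℤ) (T : List (β × ℤ)) :
    mergeS (Z ++ [w]) T = Z ++ consE w T := by
  induction Z with
  | nil => simp
  | cons z Z' IH =>
    cases Z' with
    | nil => simp
    | cons z2 Z'' =>
      simp only [List.cons_append] at *
      rw [mergeS_cons_cons, IH]

def qlS (S : List (β × ℤ)) : ℤ := (S.map (fun p => tr p.2)).sum

@[simp] theorem qlS_nil : qlS ([] : List (β × ℤ)) = 0 := rfl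
@[simp] theorem qlS_cons (x : β × ℤ) (S : List (β × ℤ)) : qlS (x :: S) = tr x.2 + qlS S := by
  simp [qlS]
theorem qlS_append (S T : List (β × ℤ)) : qlS (S ++ T) = qlS S + qlS T := by
  simp [qlS]

def juncO : Option (β × ℤ) → Option (β × ℤ) → ℤ
  | some (g, e), some (g', e') => if g = g' then tr (e + e') - tr e - tr e' else 0
  | _, _ => 0

def junc (S T : List (β × ℤ)) : ℤ := juncO S.getLast? T.head?

theorem qlS_mergeS (S T : List (β × ℤ)) :
    qlS (mergeS S T) = qlS S + qlS T + junc S T := by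
  induction S with
  | nil => simp [junc, juncO]
  | cons x S' IH =>
    cases S' with
    | nil =>
      obtain ⟨g, e⟩ := x
      cases T with
      | nil => simp [junc, juncO, consE]
      | cons u T' =>
        obtain ⟨g', e'⟩ := u
        rw [mergeS_single, consE_cons]
        by_cases h : g = g' <;>
          simp [junc, juncO, h] <;> ring
    | cons y S'' =>
      have hj : junc (x :: y :: S'') T = junc (y :: S'') T := by
        simp [junc, List.getLast?_cons_cons]
      rw [mergeS_cons_cons]
      simp only [qlS_cons]
      rw [IH, hj]
      simp only [qlS_cons]
      ring

theorem tr_neg (m : ℤ) : tr (-m) = -tr m := by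
  simp only [tr]; split_ifs <;> omega

theorem eps_eq (a b : ℤ) : tr (a + b) - tr a - tr b =
    if a % 3 = 2 ∧ b % 3 = 2 then 3 else if a % 3 = 1 ∧ b % 3 = 1 then -3 else 0 := by
  simp only [tr]; split_ifs <;> omega

def negRev (S : List (β × ℤ)) : List (β × ℤ) := (S.map (fun p => (p.1, -p.2))).reverse

theorem negRev_cons (g : β) (e : ℤ) (t : List (β × ℤ)) :
    negRev ((g, e) :: t) = negRev t ++ [(g, -e)] := by simp [negRev]

theorem wt_inv (a : β × Bool) : wt (a.1, !a.2) = -wt a := by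
  cases hb : a.2 <;> simp [wt, hb]

theorem invRev_cons (a : β × Bool) (l : List (β × Bool)) :
    FreeGroup.invRev (a :: l) = FreeGroup.invRev l ++ [(a.1, !a.2)] := by
  simp [FreeGroup.invRev]

theorem syl_invRev (L : List (β × Bool)) : syl (FreeGroup.invRev L) = negRev (syl L) := by
  induction L with
  | nil => simp [FreeGroup.invRev, negRev, syl]
  | cons a l IH =>
    have hsingle : syl [(a.1, !a.2)] = [(a.1, -wt a)] := by
      simp [syl, wt_inv]
    rw [invRev_cons, syl_append, IH, hsingle, syl_cons a l]
    cases hl : syl l with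
    | nil => simp [negRev, consS]
    | cons p t =>
      obtain ⟨g, e⟩ := p
      rw [negRev_cons, mergeS_append_singleton, consS_cons]
      by_cases h : a.1 = g
      · rw [if_pos h, negRev_cons, consE_cons, if_pos h.symm]
        simp [h]
      · rw [if_neg h, negRev_cons, negRev_cons, consE_cons,
          if_neg (fun hh => h hh.symm)]
        simp

theorem qlS_negRev (S : List (β × ℤ)) : qlS (negRev S) = -qlS S := by
  induction S with
  | nil => simp [negRev]
  | cons x S' IH =>
    obtain ⟨g, e⟩ := x
    rw [negRev_cons, qlS_append, IH, qlS_cons]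
    simp [qlS, tr_neg]
    try ring

theorem getLast?_negRev (S : List (β × ℤ)) :
    (negRev S).getLast? = S.head?.map (fun p => (p.1, -p.2)) := by
  simp [negRev, List.getLast?_reverse, List.head?_map]

theorem eps_abs (a b : ℤ) : |tr (a + b) - tr a - tr b| ≤ 3 := by
  rw [eps_eq]; split_ifs <;> simp

theorem juncO_abs (p q : Option (β × ℤ)) : |juncO p q| ≤ 3 := by
  rcases p with _ | ⟨gp, ep⟩ <;> rcases q with _ | ⟨gq, eq'⟩ <;> simp [juncO]
  split_ifs
  · exact eps_abs _ _
  · simp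

theorem juncO_bound (p c q : Option (β × ℤ)) :
    |juncO p q - juncO p c - juncO (c.map (fun x => (x.1, -x.2))) q| ≤ 3 := by
  rcases c with _ | ⟨gc, ec⟩
  · simpa [juncO] using juncO_abs p q
  · rcases p with _ | ⟨gp, ep⟩ <;> rcases q with _ | ⟨gq, eq'⟩
    · simp [juncO]
    · simpa [juncO] using juncO_abs (some (gc, -ec)) (some (gq, eq'))
    · simpa [juncO, abs_sub_comm] using juncO_abs (some (gp, ep)) (some (gc, ec))
    · simp only [juncO, Option.map_some]
      rw [eps_eq, eps_eq, eps_eq, abs_le]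
      split_ifs <;> omega

/-! ### Reduced words and `Chain'` -/

def good (x y : β × Bool) : Prop := ¬(x.1 = y.1 ∧ x.2 = !y.2)

theorem reduce_eq_self_of_chain' {L : List (β × Bool)} (h : List.Chain' good L) :
    FreeGroup.reduce L = L := by
  induction L with
  | nil => rfl
  | cons a l IH =>
    rw [FreeGroup.reduce.cons, IH h.tail]
    cases l with
    | nil => rfl
    | cons b t =>
      have hab : good a b := (List.isChain_cons_cons.1 h).1
      dsimp only
      rw [if_neg hab]

theorem chain'_of_reduce_eq_self {L : List (β × Bool)} (h : FreeGroup.reduce L = L) :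
    List.Chain' good L := by
  induction L with
  | nil => exact List.isChain_nil
  | cons a l IH =>
    rw [FreeGroup.reduce.cons] at h
    rcases hl : FreeGroup.reduce l with _ | ⟨hd, tl⟩
    · rw [hl] at h
      dsimp only at h
      have : l = [] := by
        have h' := h
        rw [List.cons.injEq] at h'
        exact h'.2.symm
      subst this
      exact List.isChain_singleton a
    · rw [hl] at h
      dsimp only at h
      by_cases hc : a.1 = hd.1 ∧ a.2 = !hd.2
      · rw [if_pos hc] at h
        exfalso
        have h1 : (FreeGroup.reduce l).length ≤ l.length :=
          FreeGroup.Red.length_le FreeGroup.reduce.red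
        rw [hl] at h1
        have h2 := congrArg List.length h
        simp at h1 h2
        omega
      · rw [if_neg hc] at h
        have hl2 : l = hd :: tl := by
          have h' := h
          rw [List.cons.injEq] at h'
          exact h'.2.symm
        subst hl2
        exact List.isChain_cons_cons.2 ⟨hc, IH (hl.trans rfl)⟩

/-! ### Maximal cancellation between two words -/

def canc : List (β × Bool) → List (β × Bool) → List (β × Bool) × List (β × Bool)
  | [], B => ([], B)
  | a :: R, B => if B.head? = some (a.1, !a.2) then canc R B.tail else (a :: R, B)

theorem canc_spec (R B : List (β × Bool)) : ∃ D : List (β × Bool),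
    R = D ++ (canc R B).1 ∧ B = D.map (fun p => (p.1, !p.2)) ++ (canc R B).2 := by
  induction R generalizing B with
  | nil => exact ⟨[], by simp [canc]⟩
  | cons a R IH =>
    cases B with
    | nil =>
      refine ⟨[], by simp [canc]⟩
    | cons b B' =>
      by_cases h : b = (a.1, !a.2)
      · subst h
        have hc : canc (a :: R) ((a.1, !a.2) :: B') = canc R B' := by simp [canc]
        obtain ⟨D, h1, h2⟩ := IH B'
        exact ⟨a :: D, by simp [hc, ← h1], by simp [hc, ← h2]⟩
      · have hc : canc (a :: R) (b :: B') = (a :: R, b :: B') := by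
          simp [canc, h]
        exact ⟨[], by simp [hc]⟩

theorem canc_stop (R B : List (β × Bool)) :
    ∀ x, (canc R B).1.head? = some x → ((canc R B).2).head? ≠ some (x.1, !x.2) := by
  induction R generalizing B with
  | nil => intro x hx; simp [canc] at hx
  | cons a R IH =>
    cases B with
    | nil =>
      intro x hx
      have hc : canc (a :: R) ([] : List (β × Bool)) = (a :: R, []) := by simp [canc]
      rw [hc]
      simp
    | cons b B' =>
      by_cases h : b = (a.1, !a.2)
      · subst h
        have hc : canc (a :: R) ((a.1, !a.2) :: B') = canc R B' := by simp [canc]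
        rw [hc]
        exact IH B'
      · have hc : canc (a :: R) (b :: B') = (a :: R, b :: B') := by simp [canc, h]
        rw [hc]
        intro x hx
        simp at hx
        subst hx
        simp [h]

/-! ### The quasimorphism property of `ql` -/

theorem ql_eq_qlS {n : ℕ} (w : FreeGroup (Fin n)) : ql w = qlS (syl w.toWord) := by
  show ((w.toWord.splitBy (fun p q => p.1 == q.1)).map
      (fun s => tr ((s.map wt).sum))).sum = _
  rw [show (fun s : List (Fin n × Bool) => tr ((s.map wt).sum))
      = (fun x => tr x) ∘ (fun s => (s.map wt).sum) from rfl,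
    ← List.map_map, splitBy_map_sum, List.map_map]
  rfl

theorem ql_mul {n : ℕ} (u v : FreeGroup (Fin n)) : |ql (u * v) - ql u - ql v| ≤ 3 := by
  obtain ⟨D, h1, h2⟩ := canc_spec u.toWord.reverse v.toWord
  set Pr : List (Fin n × Bool) := (canc u.toWord.reverse v.toWord).1 with hPr
  set Q : List (Fin n × Bool) := (canc u.toWord.reverse v.toWord).2 with hQ
  set P : List (Fin n × Bool) := Pr.reverse with hP
  set C : List (Fin n × Bool) := D.reverse with hC
  have hA : u.toWord = P ++ C := by
    rw [← List.reverse_reverse u.toWord, h1]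
    simp [hP, hC]
  have hB : v.toWord = FreeGroup.invRev C ++ Q := by
    rw [h2]
    congr 1
    simp [FreeGroup.invRev, hC]
  have hchA : List.Chain' good u.toWord :=
    chain'_of_reduce_eq_self (FreeGroup.reduce_toWord u)
  have hchB : List.Chain' good v.toWord :=
    chain'_of_reduce_eq_self (FreeGroup.reduce_toWord v)
  have hchP : List.Chain' good P := hchA.prefix ⟨C, hA.symm⟩
  have hchQ : List.Chain' good Q := hchB.suffix ⟨FreeGroup.invRev C, hB.symm⟩
  have hPQ : List.Chain' good (P ++ Q) := by
    show List.IsChain good (P ++ Q)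
    rw [List.isChain_append]
    refine ⟨hchP, hchQ, ?_⟩
    intro x hx y hy
    have hx' : Pr.head? = some x := by
      rw [← List.getLast?_reverse]
      exact hx
    have := canc_stop u.toWord.reverse v.toWord x hx'
    intro ⟨hg, hb⟩
    apply this
    have hyx : y = (x.1, !x.2) := by
      apply Prod.ext
      · exact hg.symm
      · rw [hb]; simp
    have hy' : Q.head? = some y := hy
    show Q.head? = some (x.1, !x.2)
    rw [hy', hyx]
  have hprod : u * v = FreeGroup.mk (P ++ Q) := by
    conv_lhs => rw [← FreeGroup.mk_toWord (x := u), ← FreeGroup.mk_toWord (x := v)]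
    rw [hA, hB, ← FreeGroup.mul_mk, ← FreeGroup.mul_mk, ← FreeGroup.inv_mk,
      ← FreeGroup.mul_mk]
    group
  have hword : (u * v).toWord = P ++ Q := by
    rw [hprod, FreeGroup.toWord_mk, reduce_eq_self_of_chain' hPQ]
  rw [ql_eq_qlS, ql_eq_qlS, ql_eq_qlS, hword, hA, hB,
    syl_append, syl_append, syl_append, qlS_mergeS, qlS_mergeS, qlS_mergeS,
    syl_invRev, qlS_negRev]
  have hb := juncO_bound ((syl P).getLast?) ((syl C).head?) ((syl Q).head?)
  simp only [junc, getLast?_negRev]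
  refine le_trans (le_of_eq (congrArg abs ?_)) hb
  ring

end QM
end QMAux

/-- For all `g, h ∈ Fₙ ≀ K`: `|Δ(gh) - Δ(g) - Δ(h)| ≤ 3l`, where `l = |K|`. -/
theorem delta_quasimorphism (n : ℕ) (hn : 2 ≤ n) (K : Type*) [Group K] [Fintype K]
    (g h : WreathProduct (FreeGroup (Fin n)) K) :
    |Δ (g * h) - Δ g - Δ h| ≤ 3 * (Fintype.card K : ℤ) := by
  have hleft : ∀ k : K, (g * h).left k = g.left k * h.left (g.right⁻¹ * k) := fun k => rfl
  have hΔh : Δ h = ∑ k : K, ql (h.left (g.right⁻¹ * k)) :=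
    (Equiv.sum_comp (Equiv.mulLeft g.right⁻¹) (fun k => ql (h.left k))).symm
  have hΔgh : Δ (g * h) = ∑ k : K, ql (g.left k * h.left (g.right⁻¹ * k)) :=
    Finset.sum_congr rfl (fun k _ => by rw [hleft k])
  rw [hΔgh, hΔh, show Δ g = ∑ k : K, ql (g.left k) from rfl,
    ← Finset.sum_sub_distrib, ← Finset.sum_sub_distrib]
  refine le_trans (Finset.abs_sum_le_sum_abs _ _) ?_
  refine le_trans (Finset.sum_le_sum (fun k _ => QM.ql_mul _ _)) ?_
  rw [Finset.sum_const, Finset.card_univ]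
  simp [nsmul_eq_mul, mul_comm]
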